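/- Let G be a countable group acting on a measurable space X in which singletons are measurable and for every g ∈ G the map x ↦ g·x is measurable, let μ be a probability measure on G, and let ν be a μ-stationary probability measure on X. If x ∈ X is a point whose orbit {g·x : g ∈ gr(μ)} under the subgroup gr(μ) generated by the support of μ is infinite, then ν({x}) = 0. -/

import Mathlib

open MeasureTheory

/-- A `μ`-stationary probability measure on a measurable `G`-space with measurable singletons
gives measure zero to every point whose orbit under the subgroup generated by the support
of `μ` is infinite. -/
theorem stationary_measure_atom_zero_of_infinite_orbit
    {G X : Type*} [Group G] [Countable G] [MeasurableSpace G] [DiscreteMeasurableSpace G]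
    [MeasurableSpace X] [MeasurableSingletonClass X] [MulAction G X]
    (hmeas : ∀ g : G, Measurable fun x : X => g • x)
    (μ : Measure G) [IsProbabilityMeasure μ]
    (ν : Measure X) [IsProbabilityMeasure ν]
    (hstat : ∀ A : Set X, MeasurableSet A →
      ν A = ∑' g : G, μ {g} * ν ((fun x => g • x) ⁻¹' A))
    (x : X)
    (hinf : Set.Infinite
      ((fun g : G => g • x) '' (Subgroup.closure {g : G | 0 < μ {g}} : Set G))) :
    ν {x} = 0 := by
  classical
  by_contra hx
  set H : Subgroup G := Subgroup.closure {g : G | 0 < μ {g}} with hH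
  set O : Set X := (fun g : G => g • x) '' (H : Set G) with hOdef
  -- total mass of μ as a sum of atoms
  have hsum : (∑' g : G, μ {g}) = 1 := by
    have huniv : (⋃ g : G, ({g} : Set G)) = Set.univ := by ext g; simp
    rw [← measure_univ (μ := μ), ← huniv,
      measure_iUnion (fun a b hab => by simpa using hab)
        (fun g => MeasurableSet.singleton g)]
  -- orbit is invariant under H
  have hOinv : ∀ h ∈ H, ∀ y ∈ O, h • y ∈ O := by
    rintro h hh y ⟨k, hk, rfl⟩
    exact ⟨h * k, mul_mem hh hk, by simp [mul_smul]⟩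
  have hxO : x ∈ O := ⟨1, one_mem H, one_smul G x⟩
  -- the set of points with mass ≥ ν {x} is finite
  have hFfin : Set.Finite {y : X | ν {x} ≤ ν {y}} :=
    Measure.finite_const_le_meas_of_disjoint_iUnion (μ := ν)
      (ε := ν {x}) (pos_iff_ne_zero.2 hx)
      (As := fun y : X => ({y} : Set X))
      (fun y => MeasurableSet.singleton y)
      (fun a b hab => by simpa using hab)
      (by simp [measure_ne_top])
  have hFfin' : Set.Finite (O ∩ {y : X | ν {x} ≤ ν {y}}) :=
    hFfin.subset Set.inter_subset_right
  -- a point of maximal mass on the orbit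
  obtain ⟨y₀, hy₀F, hy₀max⟩ := Set.Finite.exists_maximalFor (fun y => ν {y})
    (O ∩ {y : X | ν {x} ≤ ν {y}}) hFfin' ⟨x, hxO, le_refl (ν {x})⟩
  set m : ENNReal := ν {y₀} with hm
  have hy₀O : y₀ ∈ O := hy₀F.1
  have hxm : ν {x} ≤ m := hy₀F.2
  have hmax : ∀ z ∈ O, ν {z} ≤ m := by
    intro z hz
    by_cases hzc : ν {x} ≤ ν {z}
    · rcases le_or_gt (ν {z}) m with h | h
      · exact h
      · exact hy₀max ⟨hz, hzc⟩ h.le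
    · exact (not_le.1 hzc).le.trans hxm
  set M : Set X := {y | y ∈ O ∧ ν {y} = m} with hMdef
  have hMfin : Set.Finite M := by
    apply hFfin'.subset
    rintro y ⟨hyO, hym⟩
    exact ⟨hyO, le_of_le_of_eq hxm hym.symm⟩
  have hy₀M : y₀ ∈ M := ⟨hy₀O, rfl⟩
  have hmne : m ≠ ⊤ := measure_ne_top ν _
  -- key step: M is invariant under g⁻¹ for g in the support of μ
  have hMinv : ∀ g : G, 0 < μ {g} → ∀ y ∈ M, g⁻¹ • y ∈ M := by
    rintro g hg y ⟨hyO, hym⟩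
    have hgH : g ∈ H := Subgroup.subset_closure hg
    have hO' : g⁻¹ • y ∈ O := hOinv g⁻¹ (inv_mem hgH) y hyO
    refine ⟨hO', le_antisymm (hmax _ hO') ?_⟩
    -- use stationarity at {y}
    have hpre : ∀ h : G, (fun z : X => h • z) ⁻¹' {y} = {h⁻¹ • y} := by
      intro h; ext z
      simp [Set.mem_preimage, eq_comm, eq_inv_smul_iff]
    have hst := hstat {y} (MeasurableSet.singleton y)
    simp only [hpre] at hst
    rw [hym] at hst
    rw [ENNReal.tsum_eq_add_tsum_ite g] at hst
    set B : ENNReal := ∑' g' : G, if g' = g then 0 else μ {g'} with hB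
    have hsplit : μ {g} + B = 1 := by
      calc μ {g} + B
          = ∑' g' : G, μ {g'} :=
            (ENNReal.tsum_eq_add_tsum_ite (f := fun g' : G => μ {g'}) g).symm
        _ = 1 := hsum
    have hb : (∑' g' : G, if g' = g then 0 else μ {g'} * ν {g'⁻¹ • y}) ≤ B * m := by
      rw [hB, ← ENNReal.tsum_mul_right]
      refine ENNReal.tsum_le_tsum fun g' => ?_
      split
      · simp
      · rcases eq_or_ne (μ {g'}) 0 with h0 | h0
        · simp [h0]
        · exact mul_le_mul_right (hmax _ (hOinv g'⁻¹
            (inv_mem (Subgroup.subset_closure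
              (show 0 < μ {g'} from pos_iff_ne_zero.2 h0))) y hyO)) _
    have hfin : B * m ≠ ⊤ := by
      apply ENNReal.mul_ne_top _ hmne
      intro hB'
      rw [hB'] at hsplit
      simp at hsplit
    have key : μ {g} * m + B * m ≤ μ {g} * ν {g⁻¹ • y} + B * m := by
      calc μ {g} * m + B * m = (μ {g} + B) * m := by rw [add_mul]
        _ = m := by rw [hsplit, one_mul]
        _ = μ {g} * ν {g⁻¹ • y}
            + ∑' g' : G, (if g' = g then 0 else μ {g'} * ν {g'⁻¹ • y}) := hst
        _ ≤ μ {g} * ν {g⁻¹ • y} + B * m := add_le_add_right hb _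
    have key' : μ {g} * m ≤ μ {g} * ν {g⁻¹ • y} :=
      (ENNReal.add_le_add_iff_right hfin).1 key
    exact (ENNReal.mul_le_mul_iff_right hg.ne' (measure_ne_top μ _)).1 key'
  -- forward invariance via finiteness
  have hMinv' : ∀ g : G, 0 < μ {g} → ∀ y ∈ M, g • y ∈ M := by
    intro g hg y hy
    have hmt : Set.MapsTo (fun z : X => g⁻¹ • z) M M := fun z hz => hMinv g hg z hz
    have hbij : Set.BijOn (fun z : X => g⁻¹ • z) M M :=
      (hMfin.injOn_iff_bijOn_of_mapsTo hmt).1 (MulAction.injective g⁻¹).injOn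
    obtain ⟨z, hzM, hz⟩ := hbij.surjOn hy
    have hz' : g⁻¹ • z = y := hz
    have hzeq : z = g • y := by
      have h1 : g • g⁻¹ • z = g • y := by rw [hz']
      simpa [smul_smul] using h1
    rwa [← hzeq]
  -- M is invariant under all of H
  have hMH : ∀ h ∈ H, ∀ y ∈ M, h • y ∈ M := by
    intro h hh
    refine Subgroup.closure_induction (p := fun h _ => ∀ y ∈ M, h • y ∈ M)
      (fun g hg => hMinv' g hg) (by simp) ?_ ?_ hh
    · intro a b _ _ ha hb y hy
      rw [mul_smul]
      exact ha _ (hb y hy)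
    · intro a _ ha y hy
      have hmt : Set.MapsTo (fun z : X => a • z) M M := fun z hz => ha z hz
      have hbij : Set.BijOn (fun z : X => a • z) M M :=
        (hMfin.injOn_iff_bijOn_of_mapsTo hmt).1 (MulAction.injective a).injOn
      obtain ⟨z, hzM, hz⟩ := hbij.surjOn hy
      have hz' : a • z = y := hz
      have hzeq : z = a⁻¹ • y := by
        have h1 : a⁻¹ • a • z = a⁻¹ • y := by rw [hz']
        simpa [smul_smul] using h1
      rwa [← hzeq]
  -- the whole orbit lies in M, contradicting finiteness
  obtain ⟨h₀, hh₀, hy₀x⟩ := hy₀O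
  have hOM : O ⊆ M := by
    rintro z ⟨h, hh, rfl⟩
    have hmem : (h * h₀⁻¹) • y₀ ∈ M := hMH _ (mul_mem hh (inv_mem hh₀)) y₀ hy₀M
    have : (h * h₀⁻¹) • y₀ = h • x := by
      rw [← hy₀x]; simp [smul_smul, mul_assoc]
    rwa [this] at hmem
  exact hinf (hMfin.subset hOM)
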